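/- The folded cubes FQ_1 and FQ_2 are [1,0,4]-cycle regular, the folded cube FQ_4 is [1,9,4]-cycle regular, and for every n ≥ 3 with n ≠ 4 the folded cube FQ_n is [1,n−1,4]-cycle regular. -/

import Mathlib

open SimpleGraph

/-- A graph is `[l, lam, m]`-cycle regular if every path on `l+1` vertices
(i.e. of length `l`) belongs to exactly `lam` distinct cycles of length `m`,
cycles being counted as subgraphs. -/
def CycleRegular {V : Type*} (G : SimpleGraph V) (l lam m : ℕ) : Prop :=
  ∀ ⦃a b : V⦄ (p : G.Walk a b), p.IsPath → p.length = l →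
    {H : G.Subgraph | (∃ (x : V) (c : G.Walk x x), c.IsCycle ∧ c.length = m ∧
      c.toSubgraph = H) ∧ p.toSubgraph ≤ H}.ncard = lam

/-- The `n`-dimensional folded cube: vertices are `{0,1}^(n-1)`, two vertices
adjacent iff they differ in exactly one coordinate (hypercube edges) or in
all coordinates (diagonal edges). -/
def FQ (n : ℕ) : SimpleGraph (Fin (n - 1) → Bool) :=
  SimpleGraph.fromRel fun x y => (∃! i, x i ≠ y i) ∨ (∀ i, x i ≠ y i)


variable {V : Type*} {G : SimpleGraph V}

def quad (G : SimpleGraph V) (a b u v : V) : G.Subgraph where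
  verts := {a, b, u, v}
  Adj x y := (s(x,y) = s(a,b) ∨ s(x,y) = s(b,u) ∨ s(x,y) = s(u,v) ∨ s(x,y) = s(v,a)) ∧ G.Adj x y
  adj_sub h := h.2
  edge_vert := by
    rintro x y ⟨h | h | h | h, -⟩ <;> rw [Sym2.eq_iff] at h <;>
      rcases h with ⟨rfl, rfl⟩ | ⟨rfl, rfl⟩ <;> simp
  symm := by
    constructor
    rintro x y ⟨h, ha⟩
    exact ⟨by rw [Sym2.eq_swap] at h; exact h, ha.symm⟩

lemma quad_rot (a b u v : V) : quad G a b u v = quad G b u v a := by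
  refine SimpleGraph.Subgraph.ext ?_ ?_
  · ext x; simp [quad]; tauto
  · ext x y; simp only [quad]; tauto

lemma quad_refl (a b u v : V) : quad G a b u v = quad G b a v u := by
  refine SimpleGraph.Subgraph.ext ?_ ?_
  · ext x; simp [quad]; tauto
  · ext x y
    simp only [quad]
    constructor <;> rintro ⟨h, ha⟩ <;> refine ⟨?_, ha⟩ <;>
      [skip; skip] <;>
      · rcases h with h | h | h | h <;> rw [h, Sym2.eq_swap] <;> tauto

def quadWalk (h1 : G.Adj a b) (h2 : G.Adj b u) (h3 : G.Adj u v) (h4 : G.Adj v a) :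
    G.Walk a a := Walk.cons h1 (Walk.cons h2 (Walk.cons h3 (Walk.cons h4 Walk.nil)))

lemma quadWalk_toSubgraph (h1 : G.Adj a b) (h2 : G.Adj b u) (h3 : G.Adj u v) (h4 : G.Adj v a) :
    (quadWalk h1 h2 h3 h4).toSubgraph = quad G a b u v := by
  refine SimpleGraph.Subgraph.ext ?_ ?_
  · ext x; simp [quadWalk, quad]; tauto
  · ext x y
    simp only [quadWalk, quad, Walk.toSubgraph, Subgraph.sup_adj, subgraphOfAdj_adj,
      singletonSubgraph_adj, Pi.bot_apply, Prop.bot_eq_false, or_false]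
    constructor
    · rintro (h | h | h | h) <;> rw [Sym2.eq_iff] at h <;>
        rcases h with ⟨rfl, rfl⟩ | ⟨rfl, rfl⟩ <;>
        exact ⟨by simp only [Sym2.eq_iff]; tauto,
          by first | assumption | exact h1.symm | exact h2.symm | exact h3.symm | exact h4.symm⟩
    · rintro ⟨h, -⟩; tauto

lemma quadWalk_length (h1 : G.Adj a b) (h2 : G.Adj b u) (h3 : G.Adj u v) (h4 : G.Adj v a) :
    (quadWalk h1 h2 h3 h4).length = 4 := rfl

lemma quadWalk_isCycle [DecidableEq V] (h1 : G.Adj a b) (h2 : G.Adj b u) (h3 : G.Adj u v)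
    (h4 : G.Adj v a) (hua : u ≠ a) (hub : u ≠ b) (hva : v ≠ a) (hvb : v ≠ b) (huv : u ≠ v) :
    (quadWalk h1 h2 h3 h4).IsCycle := by
  rw [Walk.isCycle_def]
  refine ⟨?_, by simp [quadWalk], ?_⟩
  · rw [Walk.isTrail_def]
    simp [quadWalk, Sym2.eq_iff]
    have := h1.ne
    refine ⟨⟨⟨?_,?_⟩,?_⟩,⟨?_,?_⟩,?_,?_⟩ <;> tauto
  · simp [quadWalk]
    have := h1.ne
    tauto

lemma exists_quad_of_cycle {x a b : V} (c : G.Walk x x) (hc : c.IsCycle) (hl : c.length = 4)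
    (hab : c.toSubgraph.Adj a b) :
    ∃ u v : V, G.Adj b u ∧ G.Adj u v ∧ G.Adj v a ∧ u ≠ a ∧ u ≠ b ∧ v ≠ a ∧ v ≠ b ∧ u ≠ v ∧
      c.toSubgraph = quad G a b u v := by
  cases c with
  | nil => simp at hl
  | cons k1 c =>
  cases c with
  | nil => simp at hl
  | cons k2 c =>
  cases c with
  | nil => simp at hl
  | cons k3 c =>
  cases c with
  | nil => simp at hl
  | cons k4 c =>
  cases c with
  | cons k5 c => simp [Walk.length_cons] at hl
  | nil =>
  rename_i p1 p2 p3
  rw [Walk.isCycle_def] at hc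
  obtain ⟨-, -, hnd⟩ := hc
  simp only [Walk.support_cons, Walk.support_nil, List.tail_cons, List.nodup_cons,
    List.mem_cons, List.mem_singleton, List.not_mem_nil, or_false, not_or,
    List.nodup_nil, and_true] at hnd
  obtain ⟨⟨h12, h13, h1x⟩, ⟨h23, h2x⟩, h3x, -⟩ := hnd
  have hts : (Walk.cons k1 (Walk.cons k2 (Walk.cons k3 (Walk.cons k4 Walk.nil)))).toSubgraph
      = quad G x p1 p2 p3 := quadWalk_toSubgraph k1 k2 k3 k4
  simp only [Walk.toSubgraph, Subgraph.sup_adj, subgraphOfAdj_adj, singletonSubgraph_adj,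
    Pi.bot_apply, Prop.bot_eq_false, or_false] at hab
  rcases hab with h | h | h | h <;> rw [Sym2.eq_iff] at h <;>
    rcases h with ⟨rfl, rfl⟩ | ⟨rfl, rfl⟩
  · refine ⟨p2, p3, ?_, ?_, ?_, ?_, ?_, ?_, ?_, ?_, by rw [hts]⟩ <;>
      solve_by_elim [SimpleGraph.Adj.symm, Ne.symm]
  · refine ⟨p3, p2, ?_, ?_, ?_, ?_, ?_, ?_, ?_, ?_, by rw [hts, quad_refl]⟩ <;>
      solve_by_elim [SimpleGraph.Adj.symm, Ne.symm]
  · refine ⟨p3, x, ?_, ?_, ?_, ?_, ?_, ?_, ?_, ?_, by rw [hts, quad_rot]⟩ <;>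
      solve_by_elim [SimpleGraph.Adj.symm, Ne.symm]
  · refine ⟨x, p3, ?_, ?_, ?_, ?_, ?_, ?_, ?_, ?_, by rw [hts, quad_rot, quad_refl]⟩ <;>
      solve_by_elim [SimpleGraph.Adj.symm, Ne.symm]
  · refine ⟨x, p1, ?_, ?_, ?_, ?_, ?_, ?_, ?_, ?_, by rw [hts, quad_rot, quad_rot]⟩ <;>
      solve_by_elim [SimpleGraph.Adj.symm, Ne.symm]
  · refine ⟨p1, x, ?_, ?_, ?_, ?_, ?_, ?_, ?_, ?_, by rw [hts, quad_rot, quad_rot, quad_refl]⟩ <;>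
      solve_by_elim [SimpleGraph.Adj.symm, Ne.symm]
  · refine ⟨p1, p2, ?_, ?_, ?_, ?_, ?_, ?_, ?_, ?_, by rw [hts, quad_rot, quad_rot, quad_rot]⟩ <;>
      solve_by_elim [SimpleGraph.Adj.symm, Ne.symm]
  · refine ⟨p2, p1, ?_, ?_, ?_, ?_, ?_, ?_, ?_, ?_,
      by rw [hts, quad_rot, quad_rot, quad_rot, quad_refl]⟩ <;>
      solve_by_elim [SimpleGraph.Adj.symm, Ne.symm]

def pairSet (G : SimpleGraph V) (a b : V) : Set (V × V) :=
  {q | G.Adj b q.1 ∧ G.Adj q.1 q.2 ∧ G.Adj q.2 a ∧ q.1 ≠ a ∧ q.1 ≠ b ∧ q.2 ≠ a ∧ q.2 ≠ b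
    ∧ q.1 ≠ q.2}

lemma quad_injOn [DecidableEq V] {a b : V} (hab : G.Adj a b) :
    Set.InjOn (fun q : V × V => quad G a b q.1 q.2) (pairSet G a b) := by
  rintro ⟨u, v⟩ ⟨hbu, huv, hva, hua, hub, hva', hvb, huv'⟩
    ⟨u', v'⟩ ⟨hbu', hu'v', hv'a, hu'a, hu'b, hv'a', hv'b, hu'v''⟩ heq
  simp only at heq
  have hab' := hab.ne
  have h1 : (quad G a b u v).Adj b u' := heq ▸ ⟨Or.inr (Or.inl rfl), hbu'⟩
  have h2 : (quad G a b u v).Adj v' a := heq ▸ ⟨Or.inr (Or.inr (Or.inr rfl)), hv'a⟩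
  obtain ⟨d1, -⟩ := h1
  obtain ⟨d2, -⟩ := h2
  simp only [Sym2.eq_iff] at d1 d2
  have : u' = u := by tauto
  subst this
  have : v' = v := by tauto
  subst this
  rfl

lemma count4 [DecidableEq V] {a b : V} (hab : G.Adj a b) (p : G.Walk a b) (hl : p.length = 1) :
    {H : G.Subgraph | (∃ (x : V) (c : G.Walk x x), c.IsCycle ∧ c.length = 4 ∧
      c.toSubgraph = H) ∧ p.toSubgraph ≤ H}.ncard = (pairSet G a b).ncard := by
  cases p with
  | nil => simp at hl
  | cons h q =>
  cases q with
  | cons h' q' => simp [Walk.length_cons] at hl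
  | nil =>
  have hset : {H : G.Subgraph | (∃ (x : V) (c : G.Walk x x), c.IsCycle ∧ c.length = 4 ∧
      c.toSubgraph = H) ∧ (Walk.cons h Walk.nil).toSubgraph ≤ H}
      = (fun q : V × V => quad G a b q.1 q.2) '' pairSet G a b := by
    ext H
    constructor
    · rintro ⟨⟨x, c, hc, hl4, rfl⟩, hle⟩
      have hadj : c.toSubgraph.Adj a b := by
        apply hle.2
        simp [Walk.toSubgraph]
      obtain ⟨u, v, hbu, huv, hva, hua, hub, hva', hvb, huv', hq⟩ :=
        exists_quad_of_cycle c hc hl4 hadj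
      exact ⟨(u, v), ⟨hbu, huv, hva, hua, hub, hva', hvb, huv'⟩, hq.symm⟩
    · rintro ⟨⟨u, v⟩, ⟨hbu, huv, hva, hua, hub, hva', hvb, huv'⟩, rfl⟩
      refine ⟨⟨a, quadWalk hab hbu huv hva,
        quadWalk_isCycle hab hbu huv hva hua hub hva' hvb huv',
        quadWalk_length hab hbu huv hva, quadWalk_toSubgraph hab hbu huv hva⟩, ?_⟩
      simp only [Walk.toSubgraph]
      refine sup_le ?_ ?_
      · have hq : (quad G a b u v).Adj a b := ⟨Or.inl rfl, hab⟩
        exact subgraphOfAdj_le_of_adj _ hq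
      · rw [singletonSubgraph_le_iff]
        simp [quad]
  rw [hset, Set.ncard_image_of_injOn (quad_injOn hab)]


def FQG (m : ℕ) : SimpleGraph (Fin m → Bool) :=
  SimpleGraph.fromRel fun x y => (∃! i, x i ≠ y i) ∨ (∀ i, x i ≠ y i)

def Dset {m : ℕ} (x y : Fin m → Bool) : Finset (Fin m) := {i | x i ≠ y i}

def bflip {m : ℕ} (x : Fin m → Bool) (P : Finset (Fin m)) : Fin m → Bool :=
  fun i => if i ∈ P then !(x i) else x i

@[simp] lemma mem_Dset {m : ℕ} {x y : Fin m → Bool} {i : Fin m} :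
    i ∈ Dset x y ↔ x i ≠ y i := by simp [Dset]

lemma Dset_comm {m : ℕ} (x y : Fin m → Bool) : Dset x y = Dset y x := by
  ext i; simp [ne_comm]

@[simp] lemma Dset_bflip {m : ℕ} (x : Fin m → Bool) (P : Finset (Fin m)) :
    Dset x (bflip x P) = P := by
  ext i; by_cases h : i ∈ P <;> simp [bflip, h]

lemma Dset_inj {m : ℕ} (x : Fin m → Bool) {y z : Fin m → Bool}
    (h : Dset x y = Dset x z) : y = z := by
  funext i
  have := congrArg (i ∈ ·) h
  simp only [mem_Dset, eq_iff_iff] at this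
  cases hy : y i <;> cases hz : z i <;> simp [hy, hz] at this ⊢ <;>
    revert this <;> cases x i <;> simp

lemma Dset_eq_iff {m : ℕ} {x y z : Fin m → Bool} : Dset x y = Dset x z ↔ y = z :=
  ⟨Dset_inj x, fun h => h ▸ rfl⟩

lemma Dset_symmDiff {m : ℕ} (x y z : Fin m → Bool) :
    Dset x z = symmDiff (Dset x y) (Dset y z) := by
  ext i
  simp only [Finset.mem_symmDiff, mem_Dset]
  cases hx : x i <;> cases hy : y i <;> cases hz : z i <;> simp

def sC {m : ℕ} (X : Finset (Fin m)) : Prop := X.card = 1 ∨ X = Finset.univ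

lemma FQG_adj {m : ℕ} (hm : 1 ≤ m) (x y : Fin m → Bool) :
    (FQG m).Adj x y ↔ sC (Dset x y) := by
  rw [FQG, fromRel_adj]
  have hex : ∀ a b : Fin m → Bool, (∃! i, a i ≠ b i) ↔ (Dset a b).card = 1 := by
    intro a b
    rw [Finset.card_eq_one]
    constructor
    · rintro ⟨i, hi, hu⟩
      refine ⟨i, ?_⟩
      ext j
      simp only [mem_Dset, Finset.mem_singleton]
      exact ⟨fun hj => hu j hj, fun hj => hj ▸ hi⟩
    · rintro ⟨i, hi⟩
      have h1 : a i ≠ b i := by have : i ∈ Dset a b := hi ▸ Finset.mem_singleton_self i; simpa using this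
      refine ⟨i, h1, fun j hj => ?_⟩
      have : j ∈ Dset a b := by simpa using hj
      rw [hi] at this; simpa using this
  have hall : ∀ a b : Fin m → Bool, (∀ i, a i ≠ b i) ↔ Dset a b = Finset.univ := by
    intro a b
    rw [Finset.eq_univ_iff_forall]
    simp
  constructor
  · rintro ⟨hne, h | h⟩
    · rcases h with h | h
      · exact Or.inl ((hex x y).mp h)
      · exact Or.inr ((hall x y).mp h)
    · rcases h with h | h
      · refine Or.inl ?_
        rw [Dset_comm]; exact (hex y x).mp h
      · refine Or.inr ?_
        rw [Dset_comm]; exact (hall y x).mp h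
  · intro h
    have hne : x ≠ y := by
      intro he
      subst he
      have : Dset x x = ∅ := by ext i; simp
      rcases h with h | h
      · rw [this] at h; simp at h
      · rw [this] at h
        have : (0 : ℕ) < m := hm
        have := Finset.card_univ (α := Fin m) ▸ congrArg Finset.card h
        simp at this
        omega
    refine ⟨hne, Or.inl ?_⟩
    rcases h with h | h
    · exact Or.inl ((hex x y).mpr h)
    · exact Or.inr ((hall x y).mpr h)

lemma symmDiff3_self {m : ℕ} (P E : Finset (Fin m)) : symmDiff (symmDiff P E) P = E := by
  rw [symmDiff_comm P E, symmDiff_assoc, symmDiff_self, symmDiff_bot]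

lemma sC_card {m : ℕ} {X : Finset (Fin m)} (h : sC X) : X.card = 1 ∨ X.card = m := by
  rcases h with h | h
  · exact Or.inl h
  · exact Or.inr (by rw [h]; simp)

lemma not_sC_of_card {m : ℕ} {X : Finset (Fin m)} (h1 : X.card ≠ 1) (h2 : X.card ≠ m) :
    ¬ sC X := by
  rintro (h | h)
  · exact h1 h
  · exact h2 (by rw [h]; simp)

lemma three_singletons {m : ℕ} {p e q : Fin m} (hpe : p ≠ e) (hpq : p ≠ q) (heq : e ≠ q) :
    (symmDiff (symmDiff ({p} : Finset (Fin m)) {e}) {q}).card = 3 := by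
  have : symmDiff (symmDiff ({p} : Finset (Fin m)) {e}) {q} = {p, e, q} := by
    ext i
    simp only [Finset.mem_symmDiff, Finset.mem_singleton, Finset.mem_insert]
    constructor
    · tauto
    · rintro (rfl | rfl | rfl) <;> tauto
  rw [this]
  rw [Finset.card_insert_of_notMem (by simp [hpe, hpq]),
    Finset.card_insert_of_notMem (by simp [heq]), Finset.card_singleton]

lemma univ_two_singletons {m : ℕ} {p q : Fin m} (hpq : p ≠ q) :
    (symmDiff (symmDiff (Finset.univ : Finset (Fin m)) {p}) {q}).card = m - 2 := by
  have : symmDiff (symmDiff (Finset.univ : Finset (Fin m)) {p}) {q} = ({p, q} : Finset (Fin m))ᶜ := by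
    ext i
    simp only [Finset.mem_symmDiff, Finset.mem_singleton, Finset.mem_compl, Finset.mem_univ,
      Finset.mem_insert]
    by_cases hp : i = p <;> by_cases hq : i = q <;> simp_all
  rw [this, Finset.card_compl]
  congr 1
  · simp
  · rw [Finset.card_insert_of_notMem (by simp [hpq]), Finset.card_singleton]

lemma card_cases {m : ℕ} {P E Q : Finset (Fin m)}
    (hP : sC P) (hE : sC E) (hQ : sC Q) (hPE : P ≠ E) (hQE : Q ≠ E) (hPQ : P ≠ Q) :
    (symmDiff (symmDiff P E) Q).card = 3 ∨ (symmDiff (symmDiff P E) Q).card = m - 2 := by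
  rcases hP with hP | hP
  · obtain ⟨p, rfl⟩ := Finset.card_eq_one.mp hP
    rcases hE with hE | hE
    · obtain ⟨e, rfl⟩ := Finset.card_eq_one.mp hE
      rcases hQ with hQ | hQ
      · obtain ⟨q, rfl⟩ := Finset.card_eq_one.mp hQ
        have h1 : p ≠ e := by simpa [Finset.singleton_inj] using hPE
        have h2 : p ≠ q := by simpa [Finset.singleton_inj] using hPQ
        have h3 : q ≠ e := by simpa [Finset.singleton_inj] using hQE
        exact Or.inl (three_singletons h1 h2 (Ne.symm h3))
      · subst hQ
        rw [symmDiff_comm _ Finset.univ, ← symmDiff_assoc]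
        exact Or.inr (univ_two_singletons (by simpa [Finset.singleton_inj] using hPE))
    · subst hE
      rcases hQ with hQ | hQ
      · obtain ⟨q, rfl⟩ := Finset.card_eq_one.mp hQ
        rw [symmDiff_comm {p} Finset.univ]
        exact Or.inr (univ_two_singletons (by simpa [Finset.singleton_inj] using hPQ))
      · exact absurd hQ hQE
  · subst hP
    rcases hE with hE | hE
    · obtain ⟨e, rfl⟩ := Finset.card_eq_one.mp hE
      rcases hQ with hQ | hQ
      · obtain ⟨q, rfl⟩ := Finset.card_eq_one.mp hQ
        exact Or.inr (univ_two_singletons (Ne.symm (by simpa [Finset.singleton_inj] using hQE)))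
      · exact absurd hQ.symm hPQ
    · exact absurd hE.symm hPE

lemma lemA {m : ℕ} (hm : 2 ≤ m) (hm3 : m ≠ 3) {P E Q : Finset (Fin m)}
    (hP : sC P) (hE : sC E) (hQ : sC Q) (hPE : P ≠ E) (hQE : Q ≠ E) (hPQ : P ≠ Q) :
    ¬ sC (symmDiff (symmDiff P E) Q) := by
  intro hs
  rcases sC_card hs with h | h <;> rcases card_cases hP hE hQ hPE hQE hPQ with h' | h' <;> omega

lemma lemB {m : ℕ} (hm : m = 3) {P E Q : Finset (Fin m)}
    (hP : sC P) (hE : sC E) (hQ : sC Q) (hPE : P ≠ E) (hQE : Q ≠ E) :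
    sC (symmDiff (symmDiff P E) Q) := by
  by_cases hPQ : P = Q
  · subst hPQ; rw [symmDiff3_self]; exact hE
  rcases card_cases hP hE hQ hPE hQE hPQ with h | h
  · exact Or.inr (Finset.eq_univ_of_card _ (by rw [h]; simp [hm]))
  · exact Or.inl (by omega)

@[simp] lemma bflip_Dset {m : ℕ} (x y : Fin m → Bool) : bflip x (Dset x y) = y := by
  funext i
  by_cases h : x i = y i <;> simp [bflip, Dset, h] <;>
    (revert h; cases x i <;> cases y i <;> simp)

lemma Dset_self {m : ℕ} (x : Fin m → Bool) : Dset x x = ∅ := by ext i; simp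

lemma sC_ne_empty {m : ℕ} (hm : 1 ≤ m) {X : Finset (Fin m)} (h : sC X) : X ≠ ∅ := by
  rintro rfl
  rcases h with h | h
  · simp at h
  · have := congrArg Finset.card h
    simp at this
    omega

/-- the finset of admissible difference sets -/
def SF (m : ℕ) : Finset (Finset (Fin m)) :=
  (Finset.univ.image fun i : Fin m => ({i} : Finset (Fin m))) ∪ {Finset.univ}

lemma mem_SF {m : ℕ} {X : Finset (Fin m)} : X ∈ SF m ↔ sC X := by
  simp only [SF, Finset.mem_union, Finset.mem_image, Finset.mem_univ, true_and,
    Finset.mem_singleton, sC]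
  constructor
  · rintro (⟨i, rfl⟩ | rfl)
    · exact Or.inl (Finset.card_singleton i)
    · exact Or.inr rfl
  · rintro (h | rfl)
    · obtain ⟨i, rfl⟩ := Finset.card_eq_one.mp h
      exact Or.inl ⟨i, rfl⟩
    · exact Or.inr rfl

lemma card_SF {m : ℕ} (hm : 2 ≤ m) : (SF m).card = m + 1 := by
  rw [SF, Finset.card_union_of_disjoint, Finset.card_image_of_injective _
    (fun i j h => Finset.singleton_inj.mp h)]
  · simp
  · simp only [Finset.disjoint_singleton_right, Finset.mem_image, Finset.mem_univ, true_and,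
      not_exists]
    intro i h
    have := congrArg Finset.card h
    simp at this
    omega


lemma Dset_uv {m : ℕ} (a b u v : Fin m → Bool) :
    Dset u v = symmDiff (symmDiff (Dset b u) (Dset a b)) (Dset a v) := by
  rw [Dset_symmDiff u b v, Dset_symmDiff b a v, ← symmDiff_assoc, Dset_comm u b, Dset_comm b a]

lemma pairSet_eq_image {m : ℕ} (hm : 1 ≤ m) {a b : Fin m → Bool} (hab : (FQG m).Adj a b) :
    pairSet (FQG m) a b =
      (fun P : Finset (Fin m) × Finset (Fin m) => (bflip b P.1, bflip a P.2)) ''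
        {P | sC P.1 ∧ sC P.2 ∧ P.1 ≠ Dset a b ∧ P.2 ≠ Dset a b ∧
          sC (symmDiff (symmDiff P.1 (Dset a b)) P.2)} := by
  ext ⟨u, v⟩
  simp only [pairSet, Set.mem_setOf_eq, Set.mem_image, Prod.mk.injEq, Prod.exists]
  constructor
  · rintro ⟨hbu, huv, hva, hua, hub, hva', hvb, huv'⟩
    refine ⟨Dset b u, Dset a v, ⟨?_, ?_, ?_, ?_, ?_⟩, by simp, by simp⟩
    · exact (FQG_adj hm b u).mp hbu
    · rw [Dset_comm]; exact (FQG_adj hm v a).mp hva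
    · intro h
      rw [Dset_comm a b] at h
      exact hua (Dset_inj b h)
    · intro h
      exact hvb (Dset_inj a h)
    · rw [← Dset_uv]
      exact (FQG_adj hm u v).mp huv
  · rintro ⟨P, Q, ⟨hP, hQ, hPE, hQE, hs⟩, rfl, rfl⟩
    have hDu : Dset b (bflip b P) = P := Dset_bflip b P
    have hDv : Dset a (bflip a Q) = Q := Dset_bflip a Q
    refine ⟨(FQG_adj hm _ _).mpr (by rw [hDu]; exact hP),
      (FQG_adj hm _ _).mpr ?_, (FQG_adj hm _ _).mpr (by rw [Dset_comm, hDv]; exact hQ),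
      ?_, ?_, ?_, ?_, ?_⟩
    · rw [Dset_uv a b (bflip b P) (bflip a Q), hDu, hDv]
      exact hs
    · intro h
      rw [h, Dset_comm b a] at hDu
      exact hPE hDu.symm
    · intro h
      rw [h, Dset_self] at hDu
      exact sC_ne_empty hm hP hDu.symm
    · intro h
      rw [h, Dset_self] at hDv
      exact sC_ne_empty hm hQ hDv.symm
    · intro h
      rw [h] at hDv
      exact hQE hDv.symm
    · intro h
      have h2 : Dset (bflip b P) (bflip a Q) = ∅ := by rw [h, Dset_self]
      rw [Dset_uv a b (bflip b P) (bflip a Q), hDu, hDv] at h2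
      exact sC_ne_empty hm hs h2

lemma pairSet_ncard {m : ℕ} (hm : 2 ≤ m) {a b : Fin m → Bool} (hab : (FQG m).Adj a b) :
    (pairSet (FQG m) a b).ncard = if m = 3 then 9 else m := by
  have hm1 : 1 ≤ m := by omega
  have hE : sC (Dset a b) := (FQG_adj hm1 a b).mp hab
  have hEF : Dset a b ∈ SF m := mem_SF.mpr hE
  rw [pairSet_eq_image hm1 hab]
  have hinj : Function.Injective
      (fun P : Finset (Fin m) × Finset (Fin m) => (bflip b P.1, bflip a P.2)) := by
    rintro ⟨P1, Q1⟩ ⟨P2, Q2⟩ h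
    simp only [Prod.mk.injEq] at h
    obtain ⟨h1, h2⟩ := h
    have e1 := congrArg (Dset b) h1
    have e2 := congrArg (Dset a) h2
    rw [Dset_bflip, Dset_bflip] at e1
    rw [Dset_bflip, Dset_bflip] at e2
    simp [Prod.ext_iff, e1, e2]
  rw [Set.ncard_image_of_injective _ hinj]
  by_cases h3 : m = 3
  · rw [if_pos h3]
    have hset : {P : Finset (Fin m) × Finset (Fin m) | sC P.1 ∧ sC P.2 ∧ P.1 ≠ Dset a b ∧
        P.2 ≠ Dset a b ∧ sC (symmDiff (symmDiff P.1 (Dset a b)) P.2)}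
        = ↑(((SF m).erase (Dset a b)) ×ˢ ((SF m).erase (Dset a b))) := by
      ext ⟨P, Q⟩
      simp only [Set.mem_setOf_eq, Finset.coe_product, Set.mem_prod, Finset.mem_coe,
        Finset.mem_erase, mem_SF]
      constructor
      · rintro ⟨hP, hQ, hPE, hQE, -⟩
        exact ⟨⟨hPE, hP⟩, ⟨hQE, hQ⟩⟩
      · rintro ⟨⟨hPE, hP⟩, ⟨hQE, hQ⟩⟩
        exact ⟨hP, hQ, hPE, hQE, lemB h3 hP hE hQ hPE hQE⟩
    rw [hset, Set.ncard_coe_finset, Finset.card_product, Finset.card_erase_of_mem hEF,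
      card_SF hm, h3]
  · rw [if_neg h3]
    have hset : {P : Finset (Fin m) × Finset (Fin m) | sC P.1 ∧ sC P.2 ∧ P.1 ≠ Dset a b ∧
        P.2 ≠ Dset a b ∧ sC (symmDiff (symmDiff P.1 (Dset a b)) P.2)}
        = (fun P : Finset (Fin m) => (P, P)) '' ↑((SF m).erase (Dset a b)) := by
      ext ⟨P, Q⟩
      simp only [Set.mem_setOf_eq, Set.mem_image, Finset.mem_coe, Finset.mem_erase, mem_SF,
        Prod.mk.injEq]
      constructor
      · rintro ⟨hP, hQ, hPE, hQE, hs⟩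
        have hPQ : P = Q := by
          by_contra hPQ
          exact lemA hm h3 hP hE hQ hPE hQE hPQ hs
        exact ⟨P, ⟨hPE, hP⟩, rfl, hPQ⟩
      · rintro ⟨R, ⟨hRE, hR⟩, rfl, rfl⟩
        exact ⟨hR, hR, hRE, hRE, by rw [symmDiff3_self]; exact hE⟩
    rw [hset, Set.ncard_image_of_injective _ (fun P Q h => (Prod.mk.injEq _ _ _ _ ▸ h : _ ∧ _).1),
      Set.ncard_coe_finset, Finset.card_erase_of_mem hEF, card_SF hm]
    omega

lemma cycleRegular_of {V : Type*} [DecidableEq V] (G : SimpleGraph V) {lam : ℕ}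
    (h : ∀ a b, G.Adj a b → (pairSet G a b).ncard = lam) : CycleRegular G 1 lam 4 := by
  intro a b p hp hl
  cases p with
  | nil => simp at hl
  | cons hadj q =>
    cases q with
    | cons h' q' => simp [Walk.length_cons] at hl
    | nil =>
      rw [count4 hadj _ hl]
      exact h a b hadj

theorem fq_four_cycle_regular :
    CycleRegular (FQ 1) 1 0 4 ∧
    CycleRegular (FQ 2) 1 0 4 ∧
    CycleRegular (FQ 4) 1 9 4 ∧
    ∀ n : ℕ, 3 ≤ n → n ≠ 4 → CycleRegular (FQ n) 1 (n - 1) 4 := by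
  refine ⟨?_, ?_, ?_, ?_⟩
  · intro a b p hp hl
    cases p with
    | nil => simp at hl
    | cons hadj q =>
      exact absurd (funext fun i => i.elim0 : a = _) hadj.ne
  · intro a b p hp hl
    have hset : {H : (FQ 2).Subgraph | (∃ (x : Fin (2-1) → Bool) (c : (FQ 2).Walk x x),
        c.IsCycle ∧ c.length = 4 ∧ c.toSubgraph = H) ∧ p.toSubgraph ≤ H} = ∅ := by
      rw [Set.eq_empty_iff_forall_notMem]
      rintro H ⟨⟨x, c, hc, hl4, -⟩, -⟩
      have h1 : c.support.tail.length = 4 := by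
        rw [List.length_tail, Walk.length_support, hl4]
      have h2 : c.support.tail.Nodup := hc.2
      have h3 := h2.length_le_card
      rw [h1] at h3
      have h4 : Fintype.card (Fin (2 - 1) → Bool) = 2 := by simp
      omega
    rw [hset, Set.ncard_empty]
  · apply cycleRegular_of
    intro a b hab
    have := pairSet_ncard (m := 3) (by norm_num) (a := a) (b := b) hab
    rw [if_pos rfl] at this; exact this
  · intro n hn hn4
    apply cycleRegular_of
    intro a b hab
    have hm : 2 ≤ n - 1 := by omega
    have := pairSet_ncard hm (a := a) (b := b) hab
    rw [if_neg (by omega)] at this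
    exact this
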